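/- Let G be a finite simple graph on vertex set [m]_0 = {0, …, m−1} that contains a clique on the vertices {0, …, k−1} for some k ≥ 2 (i.e., K_k is a subgraph of G). Then for every n ≥ 1 the generalized Sierpiński graph S^n_G contains a subgraph isomorphic to the Sierpiński graph S^n_k. -/

import Mathlib

/-- The generalized Sierpiński graph `S^n_G` of a base graph `G` on the vertex set
`[k]_0 = {0, …, k−1}`: the vertices are the words of length `n` over `[k]_0`, and two
distinct words `u, v` are adjacent iff there is an index `i` with `u j = v j` for `j < i`,
`u i` adjacent to `v i` in `G`, and `u j = v i`, `v j = u i` for all `j > i`. -/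
def genSierpinski {k : ℕ} (G : SimpleGraph (Fin k)) (n : ℕ) :
    SimpleGraph (Fin n → Fin k) where
  Adj u v := ∃ i : Fin n,
    (∀ j, j < i → u j = v j) ∧ G.Adj (u i) (v i) ∧ ∀ j, i < j → u j = v i ∧ v j = u i
  symm := by
    constructor
    rintro u v ⟨i, h1, h2, h3⟩
    exact ⟨i, fun j hj => (h1 j hj).symm, h2.symm, fun j hj => ⟨(h3 j hj).2, (h3 j hj).1⟩⟩
  loopless := by
    constructor
    rintro u ⟨i, -, h2, -⟩
    exact G.irrefl h2

/-- The Sierpiński graph `S^n_k`, i.e. the generalized Sierpiński graph of the complete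
graph `K_k` on `[k]_0` (in which two vertices are adjacent iff they are distinct). -/
def sierpinski (k n : ℕ) : SimpleGraph (Fin n → Fin k) :=
  genSierpinski (⊤ : SimpleGraph (Fin k)) n

/-- If a graph `G` on `[m]_0` contains a clique on the vertices `{0, …, k−1}` for some
`k ≥ 2`, then for every `n ≥ 1` the generalized Sierpiński graph `S^n_G` contains a
subgraph isomorphic to the Sierpiński graph `S^n_k`. -/
theorem genSierpinski_contains_sierpinski (m k : ℕ) (hk : 2 ≤ k) (hkm : k ≤ m)
    (G : SimpleGraph (Fin m))
    (hclique : ∀ i j : Fin m, (i : ℕ) < k → (j : ℕ) < k → i ≠ j → G.Adj i j)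
    (n : ℕ) (hn : 1 ≤ n) :
    ∃ f : (Fin n → Fin k) → (Fin n → Fin m), Function.Injective f ∧
      ∀ u v, (sierpinski k n).Adj u v → (genSierpinski G n).Adj (f u) (f v) := by
  refine ⟨fun u i => Fin.castLE hkm (u i), ?_, ?_⟩
  · intro u v h
    funext i
    have := congrFun h i
    exact Fin.castLE_injective hkm this
  · rintro u v ⟨i, h1, h2, h3⟩
    refine ⟨i, fun j hj => by simp only []; rw [h1 j hj], ?_, fun j hj => ⟨by simp only []; rw [(h3 j hj).1], by simp only []; rw [(h3 j hj).2]⟩⟩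
    have hne : u i ≠ v i := h2.ne
    exact hclique _ _ (by simp) (by simp) (fun h => hne (Fin.castLE_injective hkm h))
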